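/- Let k be a field of characteristic p > 0, G a finite group, M a kG-module, R ⊴ G a p-subgroup acting trivially on M, and Q ≤ G. If the restriction of the Brauer quotient M(QR) to C_G(Q) is an indecomposable k[C_G(Q)]-module, then the restriction of M(Q) to C_G(Q) is indecomposable. -/

import Mathlib

variable {k V G : Type*} [Field k] [AddCommGroup V] [Module k V] [Group G]

/-- The subspace of `H`-fixed points `M^H` of a representation `M`. -/
def fixedSub (ρ : Representation k G V) (H : Subgroup G) : Submodule k V where
  carrier := {v | ∀ h ∈ H, ρ h v = v}
  add_mem' := by intro a b ha hb h hh; simp [map_add, ha h hh, hb h hh]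
  zero_mem' := by intro h hh; simp
  smul_mem' := by intro c v hv h hh; rw [LinearMap.map_smul, hv h hh]

/-- The relative trace map `tr_K^H : m ↦ Σ_{g ∈ [H/K]} g·m`, defined via a choice of
left coset representatives of `K` in `H` (on `K`-fixed points it is independent of
this choice). -/
noncomputable def relTrace [Finite G] (ρ : Representation k G V) (K H : Subgroup G) :
    V →ₗ[k] V :=
  letI : Fintype (H ⧸ K.subgroupOf H) := Fintype.ofFinite _
  ∑ x : H ⧸ K.subgroupOf H, ρ (x.out : G)

/-- The sum `Σ_{T < S} tr_T^S(M^T)` of the images of the relative traces from all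
proper subgroups of `S`. -/
noncomputable def traceSum [Finite G] (ρ : Representation k G V) (S : Subgroup G) :
    Submodule k V :=
  ⨆ T : {T : Subgroup G // T < S}, Submodule.map (relTrace ρ T.1 S) (fixedSub ρ T.1)

/-- The Brauer quotient (Brauer construction) `M(S) = M^S / Σ_{T<S} tr_T^S(M^T)`
as a `k`-vector space. -/
noncomputable abbrev BrauerQuotient [Finite G] (ρ : Representation k G V) (S : Subgroup G) :=
  (fixedSub ρ S) ⧸ ((traceSum ρ S).comap (fixedSub ρ S).subtype)

/-- A `k`-subspace `U` of the Brauer quotient `M(S)` is invariant under a subgroup `C`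
(of the normalizer of `S`) if the action induced by `ρ g`, `g ∈ C`, on `M(S)` maps `U`
into itself. -/
def BrauerInvariant [Finite G] (ρ : Representation k G V) (S C : Subgroup G)
    (U : Submodule k (BrauerQuotient ρ S)) : Prop :=
  ∀ g ∈ C, ∀ v gv : fixedSub ρ S, (gv : V) = ρ g (v : V) →
    Submodule.Quotient.mk v ∈ U → Submodule.Quotient.mk gv ∈ U

/-- The Brauer quotient `M(S)`, viewed as a module over `k[C]` for a subgroup `C` (of the
normalizer of `S`), is indecomposable: it is nonzero, and admits no direct sum
decomposition into two nonzero `C`-invariant subspaces. -/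
def BrauerIndecomposableOver [Finite G] (ρ : Representation k G V) (S C : Subgroup G) :
    Prop :=
  Nontrivial (BrauerQuotient ρ S) ∧
    ¬ ∃ U W : Submodule k (BrauerQuotient ρ S), BrauerInvariant ρ S C U ∧
      BrauerInvariant ρ S C W ∧ U ⊓ W = ⊥ ∧ U ⊔ W = ⊤ ∧ U ≠ ⊥ ∧ W ≠ ⊥


open scoped Pointwise

section ScottHelpers

/-- stabilizer of a vector -/
def actStab (ρ : Representation k G V) (v : V) : Subgroup G where
  carrier := {g | ρ g v = v}
  one_mem' := by simp
  mul_mem' := by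
    intro a b ha hb
    simp only [Set.mem_setOf_eq, map_mul, Module.End.mul_apply] at *
    rw [hb, ha]
  inv_mem' := by
    intro a ha
    simp only [Set.mem_setOf_eq] at *
    conv_lhs => rw [← ha]
    rw [← Module.End.mul_apply, ← map_mul, inv_mul_cancel, map_one, Module.End.one_apply]

lemma fixed_sup (ρ : Representation k G V) (v : V) (A B : Subgroup G)
    (hA : ∀ g ∈ A, ρ g v = v) (hB : ∀ g ∈ B, ρ g v = v) :
    ∀ g ∈ A ⊔ B, ρ g v = v := by
  intro g hg
  exact sup_le (show A ≤ actStab ρ v from hA) (show B ≤ actStab ρ v from hB) hg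

lemma mem_fixedSub (ρ : Representation k G V) (H : Subgroup G) (m : V) :
    m ∈ fixedSub ρ H ↔ ∀ g ∈ H, ρ g m = m := Iff.rfl

lemma rho_out_eq (ρ : Representation k G V) (K H : Subgroup G) (m : V)
    (hm : ∀ g ∈ K, ρ g m = m) (z : H ⧸ K.subgroupOf H) (h : ↥H)
    (hz : QuotientGroup.mk h = z) : ρ (z.out : G) m = ρ (h : G) m := by
  have hd : h⁻¹ * z.out ∈ K.subgroupOf H := by
    rw [← QuotientGroup.eq, hz]
    exact (QuotientGroup.out_eq' z).symm
  have hd' : ((h : G))⁻¹ * (z.out : G) ∈ K := by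
    have := Subgroup.mem_subgroupOf.mp hd
    push_cast at this; exact this
  have he : (z.out : G) = (h : G) * (((h : G))⁻¹ * (z.out : G)) := by group
  rw [he, map_mul, Module.End.mul_apply, hm _ hd']

lemma relTrace_apply [Finite G] (ρ : Representation k G V) (K H : Subgroup G) (m : V) :
    letI : Fintype (H ⧸ K.subgroupOf H) := Fintype.ofFinite _
    relTrace ρ K H m = ∑ x : H ⧸ K.subgroupOf H, ρ (x.out : G) m := by
  rw [relTrace]
  simp [LinearMap.sum_apply]

lemma relTrace_transport [Finite G] (ρ : Representation k G V) (R : Subgroup G)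
    [hRn : R.Normal] (T₀ Q : Subgroup G) (hT : T₀ ≤ Q) (m : V)
    (hm : ∀ g ∈ T₀ ⊔ R, ρ g m = m) (hQT : Q ⊓ (T₀ ⊔ R) ≤ T₀) :
    relTrace ρ T₀ Q m = relTrace ρ (T₀ ⊔ R) (Q ⊔ R) m := by
  letI : Fintype (Q ⧸ T₀.subgroupOf Q) := Fintype.ofFinite _
  letI : Fintype (↥(Q ⊔ R) ⧸ (T₀ ⊔ R).subgroupOf (Q ⊔ R)) := Fintype.ofFinite _
  rw [relTrace_apply, relTrace_apply]
  have hmT₀ : ∀ g ∈ T₀, ρ g m = m := fun g hg => hm g (Subgroup.mem_sup_left hg)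
  set ι : ↥Q →* ↥(Q ⊔ R) := Subgroup.inclusion le_sup_left with hι
  have hcoe : ∀ x : ↥Q, ((ι x : ↥(Q ⊔ R)) : G) = (x : G) := fun x => rfl
  refine Fintype.sum_bijective (fun z => QuotientGroup.mk (ι z.out)) ⟨?_, ?_⟩ _ _ (fun z => ?_)
  · -- injective
    intro z z' hzz
    have h1 : (ι z.out)⁻¹ * ι z'.out ∈ (T₀ ⊔ R).subgroupOf (Q ⊔ R) :=
      QuotientGroup.eq.mp hzz
    have h2 : ((z.out : ↥Q) : G)⁻¹ * (z'.out : G) ∈ T₀ ⊔ R := by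
      have := Subgroup.mem_subgroupOf.mp h1
      push_cast at this
      rwa [hcoe, hcoe] at this
    have h3 : ((z.out : ↥Q) : G)⁻¹ * (z'.out : G) ∈ Q :=
      mul_mem (inv_mem (z.out).2) (z'.out).2
    have h4 : (z.out : ↥Q)⁻¹ * z'.out ∈ T₀.subgroupOf Q := by
      rw [Subgroup.mem_subgroupOf]
      push_cast
      exact hQT ⟨h3, h2⟩
    rw [← QuotientGroup.out_eq' z, ← QuotientGroup.out_eq' z', QuotientGroup.eq]
    exact h4
  · -- surjective
    intro y
    have hy : ((y.out : ↥(Q ⊔ R)) : G) ∈ (Q : Set G) * (R : Set G) := by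
      rw [← Subgroup.mul_normal]
      exact (y.out).2
    obtain ⟨q, hq, r, hr, hqr⟩ := hy
    refine ⟨QuotientGroup.mk (⟨q, hq⟩ : ↥Q), ?_⟩
    set z : Q ⧸ T₀.subgroupOf Q := QuotientGroup.mk (⟨q, hq⟩ : ↥Q) with hz
    have hd : (⟨q, hq⟩ : ↥Q)⁻¹ * z.out ∈ T₀.subgroupOf Q := by
      rw [← QuotientGroup.eq, hz]
      exact (QuotientGroup.out_eq' z).symm
    have hd' : (q : G)⁻¹ * ((z.out : ↥Q) : G) ∈ T₀ := by
      have := Subgroup.mem_subgroupOf.mp hd; push_cast at this; exact this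
    rw [← QuotientGroup.out_eq' y, QuotientGroup.eq]
    rw [Subgroup.mem_subgroupOf]
    push_cast
    rw [hcoe]
    have key : ((y.out : ↥(Q ⊔ R)) : G)⁻¹ * ((z.out : ↥Q) : G) ∈ T₀ ⊔ R := by
      have heq : ((y.out : ↥(Q ⊔ R)) : G)⁻¹ * ((z.out : ↥Q) : G)
          = r⁻¹ * ((q : G)⁻¹ * ((z.out : ↥Q) : G)) := by rw [← hqr]; group
      rw [heq]
      exact mul_mem (inv_mem (Subgroup.mem_sup_right hr)) (Subgroup.mem_sup_left hd')
    have := inv_mem key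
    simpa [mul_inv_rev] using this
  · -- termwise
    rw [rho_out_eq ρ (T₀ ⊔ R) (Q ⊔ R) m hm _ (ι z.out) rfl, hcoe]

lemma sup_subset_mul (T W : Subgroup G) (hnorm : ∀ t ∈ T, ∀ w ∈ W, t * w * t⁻¹ ∈ W) :
    ((T ⊔ W : Subgroup G) : Set G) ⊆ (W : Set G) * (T : Set G) := by
  have hP : ∃ P : Subgroup G, (P : Set G) = (W : Set G) * (T : Set G) := by
    refine ⟨{ carrier := (W : Set G) * (T : Set G), one_mem' := ?_, mul_mem' := ?_, inv_mem' := ?_ }, rfl⟩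
    · rintro a b ⟨w, hw, t, ht, rfl⟩ ⟨w', hw', t', ht', rfl⟩
      refine ⟨w * (t * w' * t⁻¹), mul_mem hw (hnorm t ht w' hw'), t * t', mul_mem ht ht', by group⟩
    · exact ⟨1, one_mem W, 1, one_mem T, mul_one 1⟩
    · rintro a ⟨w, hw, t, ht, rfl⟩
      refine ⟨t⁻¹ * w⁻¹ * (t⁻¹)⁻¹, hnorm t⁻¹ (inv_mem ht) w⁻¹ (inv_mem hw), t⁻¹, inv_mem ht,
        by group⟩
  obtain ⟨P, hPset⟩ := hP
  have h1 : T ⊔ W ≤ P := by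
    refine sup_le ?_ ?_
    · intro t ht
      have : t ∈ (P : Set G) := by rw [hPset]; exact ⟨1, one_mem W, t, ht, one_mul t⟩
      exact this
    · intro w hw
      have : w ∈ (P : Set G) := by rw [hPset]; exact ⟨w, hw, 1, one_mem T, mul_one w⟩
      exact this
  intro x hx
  rw [← hPset]
  exact h1 hx

lemma card_quot_pdvd {p : ℕ} (hp : p.Prime) [Finite G] (T W : Subgroup G)
    (hWp : IsPGroup p W) (hnorm : ∀ t ∈ T, ∀ w ∈ W, t * w * t⁻¹ ∈ W) (hW : ¬ W ≤ T) :
    p ∣ Nat.card (↥(T ⊔ W) ⧸ T.subgroupOf (T ⊔ W)) := by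
  set S := T ⊔ W with hS
  set ιW : ↥W →* ↥S := Subgroup.inclusion le_sup_right with hιW
  have hcoe : ∀ x : ↥W, ((ιW x : ↥S) : G) = (x : G) := fun x => rfl
  set f : (↥W ⧸ (T ⊓ W).subgroupOf W) → (↥S ⧸ T.subgroupOf S) :=
    fun x => QuotientGroup.mk (ιW x.out) with hf
  have hbij : Function.Bijective f := by
    constructor
    · intro x x' hxx
      have h1 : (ιW x.out)⁻¹ * ιW x'.out ∈ T.subgroupOf S := QuotientGroup.eq.mp hxx
      have h2 : ((x.out : ↥W) : G)⁻¹ * ((x'.out : ↥W) : G) ∈ T := by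
        have := Subgroup.mem_subgroupOf.mp h1
        push_cast at this
        rwa [hcoe, hcoe] at this
      have h3 : ((x.out : ↥W) : G)⁻¹ * ((x'.out : ↥W) : G) ∈ W :=
        mul_mem (inv_mem (x.out).2) (x'.out).2
      have h4 : (x.out : ↥W)⁻¹ * x'.out ∈ (T ⊓ W).subgroupOf W := by
        rw [Subgroup.mem_subgroupOf]
        push_cast
        exact ⟨h2, h3⟩
      rw [← QuotientGroup.out_eq' x, ← QuotientGroup.out_eq' x', QuotientGroup.eq]
      exact h4
    · intro x
      have hx : ((x.out : ↥S) : G) ∈ (W : Set G) * (T : Set G) :=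
        sup_subset_mul T W hnorm (x.out).2
      obtain ⟨w, hw, t, ht, hwt⟩ := hx
      refine ⟨QuotientGroup.mk (⟨w, hw⟩ : ↥W), ?_⟩
      set z : ↥W ⧸ (T ⊓ W).subgroupOf W := QuotientGroup.mk (⟨w, hw⟩ : ↥W) with hz
      have hd : (⟨w, hw⟩ : ↥W)⁻¹ * z.out ∈ (T ⊓ W).subgroupOf W := by
        rw [← QuotientGroup.eq, hz]
        exact (QuotientGroup.out_eq' z).symm
      have hd' : (w : G)⁻¹ * ((z.out : ↥W) : G) ∈ T := by
        have := Subgroup.mem_subgroupOf.mp hd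
        push_cast at this
        exact this.1
      show QuotientGroup.mk (ιW z.out) = x
      rw [← QuotientGroup.out_eq' x, QuotientGroup.eq, Subgroup.mem_subgroupOf]
      push_cast
      rw [hcoe]
      have key : ((x.out : ↥S) : G)⁻¹ * ((z.out : ↥W) : G) ∈ T := by
        have heq : ((x.out : ↥S) : G)⁻¹ * ((z.out : ↥W) : G)
            = t⁻¹ * (w⁻¹ * ((z.out : ↥W) : G)) := by rw [← hwt]; group
        rw [heq]
        exact mul_mem (inv_mem ht) hd'
      have := inv_mem key
      simpa [mul_inv_rev] using this
  have hcard : Nat.card (↥W ⧸ (T ⊓ W).subgroupOf W) = Nat.card (↥S ⧸ T.subgroupOf S) :=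
    Nat.card_eq_of_bijective f hbij
  haveI : Fact p.Prime := ⟨hp⟩
  obtain ⟨n, hn⟩ := IsPGroup.exists_card_eq hWp
  have hdvd : Nat.card (↥S ⧸ T.subgroupOf S) ∣ p ^ n := by
    rw [← hn, ← hcard]
    exact Subgroup.card_quotient_dvd_card _
  obtain ⟨i, hi, hie⟩ := (Nat.dvd_prime_pow hp).mp hdvd
  have hne1 : Nat.card (↥S ⧸ T.subgroupOf S) ≠ 1 := by
    obtain ⟨w0, hw0, hw0T⟩ := SetLike.not_le_iff_exists.mp hW
    intro h1
    have := (Nat.card_eq_one_iff_unique.mp h1).1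
    have heq : (QuotientGroup.mk (⟨w0, Subgroup.mem_sup_right hw0⟩ : ↥S) :
        ↥S ⧸ T.subgroupOf S) = QuotientGroup.mk 1 := Subsingleton.elim _ _
    have := QuotientGroup.eq.mp heq
    rw [Subgroup.mem_subgroupOf] at this
    push_cast at this
    simp only [mul_one] at this
    exact hw0T (by simpa using inv_mem this)
  rw [hie]
  rw [hie] at hne1
  have hi1 : 1 ≤ i := by
    by_contra hc
    push_neg at hc
    interval_cases i
    · simp at hne1
  exact dvd_pow_self p (by omega)

lemma relTrace_eq_zero {p : ℕ} (hp : p.Prime) [CharP k p] [Finite G]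
    (ρ : Representation k G V) (T W HH : Subgroup G)
    (hTH : T ≤ HH) (hWH : W ≤ HH) (hWp : IsPGroup p W)
    (hnorm : ∀ t ∈ T, ∀ w ∈ W, t * w * t⁻¹ ∈ W) (hW : ¬ W ≤ T)
    (m : V) (hmT : ∀ g ∈ T, ρ g m = m) (hmW : ∀ g ∈ W, ρ g m = m) :
    relTrace ρ T HH m = 0 := by
  set S : Subgroup G := T ⊔ W with hSdef
  have hSH : S ≤ HH := sup_le hTH hWH
  have hTS : T ≤ S := le_sup_left
  have hmS : ∀ g ∈ S, ρ g m = m := fixed_sup ρ m T W hmT hmW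
  letI : Fintype (HH ⧸ T.subgroupOf HH) := Fintype.ofFinite _
  letI : Fintype (HH ⧸ S.subgroupOf HH) := Fintype.ofFinite _
  letI : Fintype (↥S ⧸ T.subgroupOf S) := Fintype.ofFinite _
  rw [relTrace_apply]
  set ι : ↥S →* ↥HH := Subgroup.inclusion hSH with hι
  have hcoe : ∀ x : ↥S, ((ι x : ↥HH) : G) = (x : G) := fun x => rfl
  set e : (HH ⧸ S.subgroupOf HH) × (↥S ⧸ T.subgroupOf S) → HH ⧸ T.subgroupOf HH :=
    fun q => QuotientGroup.mk (q.1.out * ι q.2.out) with he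
  have hbij : Function.Bijective e := by
    constructor
    · rintro ⟨y, x⟩ ⟨y', x'⟩ hq
      have h1 : (y.out * ι x.out)⁻¹ * (y'.out * ι x'.out) ∈ T.subgroupOf HH :=
        QuotientGroup.eq.mp hq
      have h1' : ((x.out : ↥S) : G)⁻¹ * ((y.out : ↥HH) : G)⁻¹ * (y'.out : G) *
          ((x'.out : ↥S) : G) ∈ T := by
        have := Subgroup.mem_subgroupOf.mp h1
        push_cast at this
        rw [hcoe, hcoe] at this
        convert this using 1
        group
      have hyS : ((y.out : ↥HH) : G)⁻¹ * ((y'.out : ↥HH) : G) ∈ S := by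
        have h2 : ((y.out : ↥HH) : G)⁻¹ * (y'.out : G)
            = ((x.out : ↥S) : G) * (((x.out : ↥S) : G)⁻¹ * ((y.out : ↥HH) : G)⁻¹ *
              (y'.out : G) * ((x'.out : ↥S) : G)) * ((x'.out : ↥S) : G)⁻¹ := by
          group
        rw [h2]
        exact mul_mem (mul_mem (x.out).2 (hTS h1')) (inv_mem (x'.out).2)
      have hyy : y = y' := by
        rw [← QuotientGroup.out_eq' y, ← QuotientGroup.out_eq' y', QuotientGroup.eq]
        rw [Subgroup.mem_subgroupOf]
        push_cast
        exact hyS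
      subst hyy
      have hxx : x = x' := by
        rw [← QuotientGroup.out_eq' x, ← QuotientGroup.out_eq' x', QuotientGroup.eq]
        rw [Subgroup.mem_subgroupOf]
        have h3 : ((x.out : ↥S) : G)⁻¹ * ((x'.out : ↥S) : G) ∈ T := by
          have heq : ((x.out : ↥S) : G)⁻¹ * ((y.out : ↥HH) : G)⁻¹ * ((y.out : ↥HH) : G) *
              ((x'.out : ↥S) : G) = ((x.out : ↥S) : G)⁻¹ * ((x'.out : ↥S) : G) := by group
          rwa [heq] at h1'
        push_cast
        exact h3
      rw [hxx]
    · intro z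
      set y : HH ⧸ S.subgroupOf HH := QuotientGroup.mk z.out with hy
      have hs : (z.out : ↥HH)⁻¹ * y.out ∈ S.subgroupOf HH := by
        rw [← QuotientGroup.eq, hy]
        exact (QuotientGroup.out_eq' y).symm
      have hsG : ((z.out : ↥HH) : G)⁻¹ * ((y.out : ↥HH) : G) ∈ S := by
        have := Subgroup.mem_subgroupOf.mp hs; push_cast at this; exact this
      set σ : ↥S := (⟨_, hsG⟩ : ↥S)⁻¹ with hσ
      refine ⟨(y, QuotientGroup.mk σ), ?_⟩
      set x : ↥S ⧸ T.subgroupOf S := QuotientGroup.mk σ with hx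
      have hτ : σ⁻¹ * x.out ∈ T.subgroupOf S := by
        rw [← QuotientGroup.eq, hx]
        exact (QuotientGroup.out_eq' x).symm
      have hτ' : ((σ : G))⁻¹ * ((x.out : ↥S) : G) ∈ T := by
        have := Subgroup.mem_subgroupOf.mp hτ; push_cast at this; exact this
      show QuotientGroup.mk (y.out * ι x.out) = z
      rw [← QuotientGroup.out_eq' z, QuotientGroup.eq, Subgroup.mem_subgroupOf]
      push_cast
      rw [hcoe]
      have key : ((y.out : ↥HH) : G) * ((x.out : ↥S) : G)
          = ((z.out : ↥HH) : G) * (((σ : G))⁻¹ * ((x.out : ↥S) : G)) := by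
        have hσG : (σ : G) = (((z.out : ↥HH) : G)⁻¹ * ((y.out : ↥HH) : G))⁻¹ := rfl
        rw [hσG]
        group
      have : ((y.out * ι x.out : ↥HH) : G)⁻¹ * ((z.out : ↥HH) : G) ∈ T := by
        push_cast
        rw [hcoe, key]
        have : (((z.out : ↥HH) : G) * (((σ : G))⁻¹ * ((x.out : ↥S) : G)))⁻¹ *
            ((z.out : ↥HH) : G)
            = (((σ : G))⁻¹ * ((x.out : ↥S) : G))⁻¹ *
              (((z.out : ↥HH) : G)⁻¹ * ((z.out : ↥HH) : G)) := by group
        rw [this]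
        simp only [inv_mul_cancel, mul_one]
        exact inv_mem hτ'
      have goal' := this
      push_cast at goal'
      convert goal' using 2
      rw [hcoe]
  have step1 : ∑ z : HH ⧸ T.subgroupOf HH, ρ (z.out : G) m
      = ∑ q : (HH ⧸ S.subgroupOf HH) × (↥S ⧸ T.subgroupOf S),
          ρ ((q.1.out : G) * ((q.2.out : ↥S) : G)) m := by
    refine (Fintype.sum_bijective e hbij _ _ (fun q => ?_)).symm
    rw [rho_out_eq ρ T HH m hmT (e q) (q.1.out * ι q.2.out) rfl]
    push_cast
    rw [hcoe]
  rw [step1]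
  have step2 : ∀ q : (HH ⧸ S.subgroupOf HH) × (↥S ⧸ T.subgroupOf S),
      ρ ((q.1.out : G) * ((q.2.out : ↥S) : G)) m = ρ (q.1.out : G) m := by
    intro q
    rw [map_mul, Module.End.mul_apply, hmS _ (q.2.out).2]
  rw [Fintype.sum_prod_type]
  have hdvd : p ∣ Nat.card (↥S ⧸ T.subgroupOf S) := card_quot_pdvd hp T W hWp hnorm hW
  have hzero : (Fintype.card (↥S ⧸ T.subgroupOf S) : k) = 0 := by
    rw [← Nat.card_eq_fintype_card]
    exact (CharP.cast_eq_zero_iff k p _).mpr hdvd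
  calc ∑ y : HH ⧸ S.subgroupOf HH, ∑ x : ↥S ⧸ T.subgroupOf S,
        ρ ((y.out : G) * ((x.out : ↥S) : G)) m
      = ∑ y : HH ⧸ S.subgroupOf HH, ∑ _x : ↥S ⧸ T.subgroupOf S, ρ (y.out : G) m := by
        refine Finset.sum_congr rfl fun y _ => Finset.sum_congr rfl fun x _ => step2 (y, x)
    _ = ∑ y : HH ⧸ S.subgroupOf HH, (Fintype.card (↥S ⧸ T.subgroupOf S) : k) •
          ρ (y.out : G) m := by
        refine Finset.sum_congr rfl fun y _ => ?_
        rw [Finset.sum_const, Finset.card_univ, Nat.cast_smul_eq_nsmul]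
    _ = 0 := by
        simp [hzero]

end ScottHelpers


section ScottMain

lemma fixedSub_sup_eq [Finite G] (ρ : Representation k G V) (R Q : Subgroup G)
    (htriv : ∀ r ∈ R, ∀ v : V, ρ r v = v) :
    fixedSub ρ (Q ⊔ R) = fixedSub ρ Q := by
  apply le_antisymm
  · intro m hm g hg
    exact hm g (Subgroup.mem_sup_left hg)
  · intro m hm
    exact fixed_sup ρ m Q R hm (fun g hg => htriv g hg m)

lemma traceSum_sup_eq {p : ℕ} (hp : p.Prime) [CharP k p] [Finite G]
    (ρ : Representation k G V) (R : Subgroup G) (hRn : R.Normal) (hRp : IsPGroup p R)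
    (htriv : ∀ r ∈ R, ∀ v : V, ρ r v = v) (Q : Subgroup G) :
    traceSum ρ (Q ⊔ R) = traceSum ρ Q := by
  haveI := hRn
  apply le_antisymm
  · -- traceSum (Q ⊔ R) ≤ traceSum Q
    rw [traceSum]
    refine iSup_le ?_
    rintro ⟨T, hT⟩
    rintro v hv
    rw [Submodule.mem_map] at hv
    obtain ⟨m, hmfix, rfl⟩ := hv
    have hmT : ∀ g ∈ T, ρ g m = m := hmfix
    have hmR : ∀ g ∈ R, ρ g m = m := fun g hg => htriv g hg m
    by_cases hRT : R ≤ T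
    · set T₀ : Subgroup G := T ⊓ Q with hT₀
      have hT₀R : T₀ ⊔ R = T := by
        apply le_antisymm (sup_le inf_le_left hRT)
        intro t ht
        have htQR : t ∈ (Q : Set G) * (R : Set G) := by
          rw [← Subgroup.mul_normal]
          exact hT.le ht
        obtain ⟨q, hq, r, hr, hqr⟩ := htQR
        have hqT : q ∈ T := by
          have : q = t * r⁻¹ := by rw [← hqr]; group
          rw [this]
          exact mul_mem ht (inv_mem (hRT hr))
        have : t = q * r := hqr.symm
        rw [this]
        exact mul_mem (Subgroup.mem_sup_left (Subgroup.mem_inf.mpr ⟨hqT, hq⟩))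
          (Subgroup.mem_sup_right hr)
      have hT₀Q : T₀ < Q := by
        refine lt_of_le_of_ne inf_le_right ?_
        intro hc
        have hQT' : Q ≤ T := hc ▸ inf_le_left
        have : Q ⊔ R ≤ T := sup_le hQT' hRT
        exact absurd (le_antisymm hT.le this) hT.ne
      have hm' : ∀ g ∈ T₀ ⊔ R, ρ g m = m := fun g hg => hmT g (hT₀R ▸ hg)
      have hQT : Q ⊓ (T₀ ⊔ R) ≤ T₀ := by
        rw [hT₀R]
        exact fun x hx => Subgroup.mem_inf.mpr
          ⟨(Subgroup.mem_inf.mp hx).2, (Subgroup.mem_inf.mp hx).1⟩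
      have key : relTrace ρ T₀ Q m = relTrace ρ T (Q ⊔ R) m := by
        rw [relTrace_transport ρ R T₀ Q (inf_le_right) m hm' hQT, hT₀R]
      rw [traceSum]
      refine Submodule.mem_iSup_of_mem ⟨T₀, hT₀Q⟩ ?_
      rw [Submodule.mem_map]
      exact ⟨m, fun g hg => hmT g (Subgroup.mem_inf.mp hg).1, key⟩
    · have : relTrace ρ T (Q ⊔ R) m = 0 :=
        relTrace_eq_zero hp ρ T R (Q ⊔ R) hT.le le_sup_right hRp
          (fun t _ w hw => hRn.conj_mem w hw t) hRT m hmT hmR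
      rw [this]
      exact Submodule.zero_mem _
  · -- traceSum Q ≤ traceSum (Q ⊔ R)
    rw [traceSum]
    refine iSup_le ?_
    rintro ⟨T, hT⟩
    rintro v hv
    rw [Submodule.mem_map] at hv
    obtain ⟨m, hmfix, rfl⟩ := hv
    have hmT : ∀ g ∈ T, ρ g m = m := hmfix
    have hmR : ∀ g ∈ R, ρ g m = m := fun g hg => htriv g hg m
    by_cases hWT : Q ⊓ R ≤ T
    · have hQT : Q ⊓ (T ⊔ R) ≤ T := by
        rintro q ⟨hqQ, hqTR⟩
        have hq' : q ∈ (T : Set G) * (R : Set G) := by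
          rw [← Subgroup.mul_normal]
          exact hqTR
        obtain ⟨t, ht, r, hr, hqr⟩ := hq'
        have hrQR : r ∈ Q ⊓ R := by
          rw [Subgroup.mem_inf]
          refine ⟨?_, hr⟩
          have : r = t⁻¹ * q := by rw [← hqr]; group
          rw [this]
          exact mul_mem (inv_mem (hT.le ht)) hqQ
        have : q = t * r := hqr.symm
        rw [this]
        exact mul_mem ht (hWT hrQR)
      have hm' : ∀ g ∈ T ⊔ R, ρ g m = m := fixed_sup ρ m T R hmT hmR
      have hlt : T ⊔ R < Q ⊔ R := by
        refine lt_of_le_of_ne (sup_le_sup_right hT.le R) ?_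
        intro hc
        have : Q ≤ T ⊔ R := hc ▸ le_sup_left
        have hQleT : Q ≤ T := fun q hq => hQT ⟨hq, this hq⟩
        exact absurd (le_antisymm hT.le hQleT) hT.ne
      have key : relTrace ρ (T ⊔ R) (Q ⊔ R) m = relTrace ρ T Q m :=
        (relTrace_transport ρ R T Q hT.le m hm' hQT).symm
      rw [traceSum]
      refine Submodule.mem_iSup_of_mem ⟨T ⊔ R, hlt⟩ ?_
      rw [Submodule.mem_map]
      exact ⟨m, hm', key⟩
    · have : relTrace ρ T Q m = 0 :=
        relTrace_eq_zero hp ρ T (Q ⊓ R) Q hT.le inf_le_left (hRp.to_le inf_le_right)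
          (fun t ht w hw => Subgroup.mem_inf.mpr
            ⟨mul_mem (mul_mem (hT.le ht) (Subgroup.mem_inf.mp hw).1) (inv_mem (hT.le ht)),
              hRn.conj_mem w (Subgroup.mem_inf.mp hw).2 t⟩) hWT m hmT
          (fun g hg => htriv g (Subgroup.mem_inf.mp hg).2 m)
      rw [this]
      exact Submodule.zero_mem _

/-- unfolded form of `BrauerIndecomposableOver`, as a function of the two submodules -/
def auxProp [Finite G] (ρ : Representation k G V) (C : Subgroup G) (F TS : Submodule k V) :
    Prop :=
  Nontrivial (F ⧸ (TS.comap F.subtype)) ∧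
    ¬ ∃ U W : Submodule k (F ⧸ (TS.comap F.subtype)),
      (∀ g ∈ C, ∀ v gv : F, (gv : V) = ρ g (v : V) →
        Submodule.Quotient.mk v ∈ U → Submodule.Quotient.mk gv ∈ U) ∧
      (∀ g ∈ C, ∀ v gv : F, (gv : V) = ρ g (v : V) →
        Submodule.Quotient.mk v ∈ W → Submodule.Quotient.mk gv ∈ W) ∧
      U ⊓ W = ⊥ ∧ U ⊔ W = ⊤ ∧ U ≠ ⊥ ∧ W ≠ ⊥

lemma brauer_eq_auxProp [Finite G] (ρ : Representation k G V) (S C : Subgroup G) :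
    BrauerIndecomposableOver ρ S C = auxProp ρ C (fixedSub ρ S) (traceSum ρ S) := rfl

end ScottMain

/-- Let `k` be a field of characteristic `p > 0`, `G` a finite group, `M` a `kG`-module,
`R ⊴ G` a normal `p`-subgroup acting trivially on `M`, and `Q ≤ G`. If the restriction
of `M(QR)` to `C_G(Q)` is indecomposable, then the restriction of `M(Q)` to `C_G(Q)` is
indecomposable. -/
theorem scott_brauer_indecomposable {p : ℕ} (hp : p.Prime) [CharP k p] [Finite G]
    (ρ : Representation k G V) (R : Subgroup G) (hRn : R.Normal) (hRp : IsPGroup p R)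
    (htriv : ∀ r ∈ R, ∀ v : V, ρ r v = v) (Q : Subgroup G)
    (h : BrauerIndecomposableOver ρ (Q ⊔ R) (Subgroup.centralizer (Q : Set G))) :
    BrauerIndecomposableOver ρ Q (Subgroup.centralizer (Q : Set G)) := by
  have hfix : fixedSub ρ (Q ⊔ R) = fixedSub ρ Q := fixedSub_sup_eq ρ R Q htriv
  have htr : traceSum ρ (Q ⊔ R) = traceSum ρ Q := traceSum_sup_eq hp ρ R hRn hRp htriv Q
  rw [brauer_eq_auxProp] at h ⊢
  rw [hfix, htr] at h
  exact h
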